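/- Let u_l > u_r and ρ_l, ρ_r > 0, and suppose that for each ε in some interval (0, η) the pair (u*_ε, ρ*_ε) satisfies u_r < u*_ε < u_l, ρ*_ε > max(ρ_l, ρ_r), together with the two equations (u*_ε − u_l)²·(ρ*_ε + ρ_l)/2 = ε·(ρ*_ε − ρ_l)·(p(ρ*_ε) − p(ρ_l)) and (u*_ε − u_r)²·(ρ*_ε + ρ_r)/2 = ε·(ρ*_ε − ρ_r)·(p(ρ*_ε) − p(ρ_r)). Define the shock speeds s₁(ε) = (u*_ε + u_l)/2 + ε·(p(ρ*_ε) − p(ρ_l))/(u*_ε − u_l) and s₂(ε) = (u*_ε + u_r)/2 + ε·(p(ρ*_ε) − p(ρ_r))/(u*_ε − u_r). Then s₁(ε) → (u_l + u_r)/2 and s₂(ε) → (u_l + u_r)/2 as ε → 0⁺. -/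

import Mathlib

open Real Filter Topology

noncomputable def p (ρ : ℝ) : ℝ := ∫ ξ in (0:ℝ)..ρ, ξ * Real.exp ξ

lemma p_eq (ρ : ℝ) : p ρ = (ρ - 1) * Real.exp ρ + 1 := by
  have h : ∀ x ∈ Set.uIcc (0:ℝ) ρ,
      HasDerivAt (fun ξ => (ξ - 1) * Real.exp ξ) (x * Real.exp x) x := by
    intro x _
    have := ((hasDerivAt_id x).sub_const 1).mul (Real.hasDerivAt_exp x)
    exact this.congr_deriv (by simp only [id]; ring)
  have hint : IntervalIntegrable (fun x => x * Real.exp x) MeasureTheory.volume 0 ρ :=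
    (continuous_id.mul Real.continuous_exp).intervalIntegrable _ _
  have h2 := intervalIntegral.integral_eq_sub_of_hasDerivAt h hint
  simp only [p, h2, Real.exp_zero]
  ring

lemma p_mono : StrictMonoOn p (Set.Ici (0:ℝ)) := by
  have h : StrictMonoOn (fun ρ : ℝ => (ρ - 1) * Real.exp ρ + 1) (Set.Ici (0:ℝ)) := by
    apply strictMonoOn_of_deriv_pos (convex_Ici 0)
    · fun_prop
    · intro x hx
      rw [interior_Ici] at hx
      have hd : HasDerivAt (fun ρ : ℝ => (ρ - 1) * Real.exp ρ + 1) (x * Real.exp x) x := by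
        have := (((hasDerivAt_id x).sub_const 1).mul (Real.hasDerivAt_exp x)).add_const 1
        exact this.congr_deriv (by simp only [id]; ring)
      rw [hd.deriv]
      exact mul_pos hx (Real.exp_pos x)
  intro a ha b hb hab
  rw [p_eq, p_eq]
  exact h ha hb hab

lemma p_zero : p 0 = 0 := by simp [p_eq]

lemma p_nonneg {ρ : ℝ} (h : 0 ≤ ρ) : 0 ≤ p ρ := by
  rcases eq_or_lt_of_le h with h'|h'
  · simp [← h', p_zero]
  · have := p_mono (le_refl (0:ℝ)) h h'
    simpa [p_zero] using this.le

lemma ratio_tendsto (c d : ℝ) : Tendsto (fun x : ℝ => (x + c)/(x + d)) atTop (𝓝 1) := by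
  have h0 : Tendsto (fun x : ℝ => (c - d)/(x + d)) atTop (𝓝 0) :=
    Tendsto.div_atTop tendsto_const_nhds (tendsto_atTop_add_const_right _ d tendsto_id)
  have h1 : Tendsto (fun x : ℝ => 1 + (c - d)/(x + d)) atTop (𝓝 (1 + 0)) :=
    tendsto_const_nhds.add h0
  rw [add_zero] at h1
  refine h1.congr' ?_
  filter_upwards [eventually_gt_atTop (-d)] with x hx
  have : x + d ≠ 0 := by linarith
  field_simp
  ring

/-- auxiliary: single shock-speed limit -/
lemma aux_speed {us ρs : ℝ → ℝ} {u0 ρ0 m η : ℝ} (hη : 0 < η)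
    (hm : Tendsto us (𝓝[>] (0:ℝ)) (𝓝 m))
    (hA : Tendsto (fun ε => (ρs ε + ρ0)/(ρs ε - ρ0)) (𝓝[>] (0:ℝ)) (𝓝 1))
    (hne : ∀ ε ∈ Set.Ioo (0:ℝ) η, us ε ≠ u0 ∧ ρ0 < ρs ε)
    (heq : ∀ ε ∈ Set.Ioo (0:ℝ) η,
      (us ε - u0) ^ 2 * (ρs ε + ρ0) / 2 = ε * (ρs ε - ρ0) * (p (ρs ε) - p ρ0)) :
    Tendsto (fun ε => (us ε + u0) / 2 + ε * (p (ρs ε) - p ρ0) / (us ε - u0))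
      (𝓝[>] (0:ℝ)) (𝓝 m) := by
  have h1 : Tendsto (fun ε => (us ε + u0)/2 + (us ε - u0) * ((ρs ε + ρ0)/(ρs ε - ρ0))/2)
      (𝓝[>] (0:ℝ)) (𝓝 ((m + u0)/2 + (m - u0) * 1 / 2)) :=
    ((hm.add_const u0).div_const 2).add (((hm.sub_const u0).mul hA).div_const 2)
  rw [show (m + u0)/2 + (m - u0) * 1 / 2 = m by ring] at h1
  refine h1.congr' ?_
  filter_upwards [Ioo_mem_nhdsGT_of_mem ⟨le_refl (0:ℝ), hη⟩] with ε hε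
  obtain ⟨hne', hρ⟩ := hne ε hε
  have e := heq ε hε
  have h3 : us ε - u0 ≠ 0 := sub_ne_zero.mpr hne'
  have h4 : ρs ε - ρ0 ≠ 0 := ne_of_gt (by linarith)
  have : (us ε - u0) * ((ρs ε + ρ0)/(ρs ε - ρ0))/2 = ε * (p (ρs ε) - p ρ0) / (us ε - u0) := by
    field_simp
    linear_combination 2 * e
  rw [this]

/-- Both shock speeds `s₁(ε), s₂(ε)` of the two-shock Riemann solution tend to
`(u_l + u_r)/2` as `ε → 0⁺`. -/
theorem stmt8 (ul ur ρl ρr η : ℝ) (hu : ur < ul) (hρl : 0 < ρl) (hρr : 0 < ρr)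
    (hη : 0 < η) (us ρs : ℝ → ℝ)
    (hmem : ∀ ε ∈ Set.Ioo (0:ℝ) η, ur < us ε ∧ us ε < ul ∧ max ρl ρr < ρs ε)
    (heq1 : ∀ ε ∈ Set.Ioo (0:ℝ) η,
      (us ε - ul) ^ 2 * (ρs ε + ρl) / 2 = ε * (ρs ε - ρl) * (p (ρs ε) - p ρl))
    (heq2 : ∀ ε ∈ Set.Ioo (0:ℝ) η,
      (us ε - ur) ^ 2 * (ρs ε + ρr) / 2 = ε * (ρs ε - ρr) * (p (ρs ε) - p ρr)) :
    Tendsto (fun ε => (us ε + ul) / 2 + ε * (p (ρs ε) - p ρl) / (us ε - ul))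
      (𝓝[>] (0:ℝ)) (𝓝 ((ul + ur) / 2)) ∧
    Tendsto (fun ε => (us ε + ur) / 2 + ε * (p (ρs ε) - p ρr) / (us ε - ur))
      (𝓝[>] (0:ℝ)) (𝓝 ((ul + ur) / 2)) := by
  have hIoo : ∀ᶠ ε in 𝓝[>] (0:ℝ), ε ∈ Set.Ioo (0:ℝ) η :=
    Ioo_mem_nhdsGT_of_mem ⟨le_refl 0, hη⟩
  -- basic facts
  have hfacts : ∀ ε ∈ Set.Ioo (0:ℝ) η, ρl < ρs ε ∧ ρr < ρs ε ∧ 0 < ρs ε ∧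
      p ρl < p (ρs ε) ∧ p ρr < p (ρs ε) := by
    intro ε hε
    obtain ⟨h1, h2, h3⟩ := hmem ε hε
    have hsl : ρl < ρs ε := lt_of_le_of_lt (le_max_left _ _) h3
    have hsr : ρr < ρs ε := lt_of_le_of_lt (le_max_right _ _) h3
    have hs0 : 0 < ρs ε := lt_trans hρl hsl
    exact ⟨hsl, hsr, hs0, p_mono hρl.le hs0.le hsl, p_mono hρr.le hs0.le hsr⟩
  -- lower bound on p(ρs ε)
  have hpbig : ∀ᶠ ε in 𝓝[>] (0:ℝ), (ul - ur)^2/(8*ε) ≤ p (ρs ε) := by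
    filter_upwards [hIoo] with ε hε
    obtain ⟨h1, h2, h3⟩ := hmem ε hε
    obtain ⟨hsl, hsr, hs0, hpl, hpr⟩ := hfacts ε hε
    have hε0 : 0 < ε := hε.1
    have e1 := heq1 ε hε
    have e2 := heq2 ε hε
    have hPl0 : 0 ≤ p ρl := p_nonneg hρl.le
    have hPr0 : 0 ≤ p ρr := p_nonneg hρr.le
    have hb1 : (us ε - ul)^2 ≤ 2*ε*p (ρs ε) := by
      nlinarith [sq_nonneg (us ε - ul), mul_nonneg hε0.le hPl0,
        mul_pos hε0 (mul_pos (sub_pos.mpr hsl) (sub_pos.mpr hpl))]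
    have hb2 : (us ε - ur)^2 ≤ 2*ε*p (ρs ε) := by
      nlinarith [sq_nonneg (us ε - ur), mul_nonneg hε0.le hPr0,
        mul_pos hε0 (mul_pos (sub_pos.mpr hsr) (sub_pos.mpr hpr))]
    rw [div_le_iff₀ (by positivity)]
    nlinarith [sq_nonneg ((ul - us ε) - (us ε - ur))]
  have hpT : Tendsto (fun ε => p (ρs ε)) (𝓝[>] (0:ℝ)) atTop := by
    refine tendsto_atTop_mono' _ hpbig ?_
    have h1 : Tendsto (fun ε : ℝ => ε⁻¹) (𝓝[>] (0:ℝ)) atTop := tendsto_inv_nhdsGT_zero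
    have h2 := h1.const_mul_atTop (show (0:ℝ) < (ul-ur)^2/8 by
      have := sub_pos.mpr hu; positivity)
    refine h2.congr fun x => ?_
    rw [← div_eq_mul_inv, div_div]
  have hρT : Tendsto (fun ε => ρs ε) (𝓝[>] (0:ℝ)) atTop := by
    rw [tendsto_atTop]
    intro M
    filter_upwards [hpT.eventually_ge_atTop (p (max M 0) + 1), hIoo] with ε hp hε
    obtain ⟨hsl, hsr, hs0, _, _⟩ := hfacts ε hε
    by_contra hcon
    push_neg at hcon
    have : p (ρs ε) ≤ p (max M 0) :=
      p_mono.monotoneOn hs0.le (le_max_right M 0) (hcon.le.trans (le_max_left M 0))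
    linarith
  -- ratio limits
  have hAl : Tendsto (fun ε => (ρs ε + ρl)/(ρs ε - ρl)) (𝓝[>] (0:ℝ)) (𝓝 1) := by
    have := (ratio_tendsto ρl (-ρl)).comp hρT
    simpa [Function.comp_def, sub_eq_add_neg] using this
  have hAr : Tendsto (fun ε => (ρs ε + ρr)/(ρs ε - ρr)) (𝓝[>] (0:ℝ)) (𝓝 1) := by
    have := (ratio_tendsto ρr (-ρr)).comp hρT
    simpa [Function.comp_def, sub_eq_add_neg] using this
  have hF1 : Tendsto (fun ε => (ρs ε - ρl)/(ρs ε + ρl)) (𝓝[>] (0:ℝ)) (𝓝 1) := by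
    have := (ratio_tendsto (-ρl) ρl).comp hρT
    simpa [Function.comp_def, sub_eq_add_neg] using this
  have hF3 : Tendsto (fun ε => (p (ρs ε) - p ρl)/(p (ρs ε) - p ρr)) (𝓝[>] (0:ℝ)) (𝓝 1) := by
    have := (ratio_tendsto (-(p ρl)) (-(p ρr))).comp hpT
    simpa [Function.comp_def, sub_eq_add_neg] using this
  have hF : Tendsto (fun ε => (ρs ε - ρl)/(ρs ε + ρl) * ((ρs ε + ρr)/(ρs ε - ρr)) *
      ((p (ρs ε) - p ρl)/(p (ρs ε) - p ρr))) (𝓝[>] (0:ℝ)) (𝓝 1) := by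
    have := (hF1.mul hAr).mul hF3
    simpa using this
  -- t² limit
  have ht2 : Tendsto (fun ε => ((ul - us ε)/(us ε - ur))^2) (𝓝[>] (0:ℝ)) (𝓝 1) := by
    refine hF.congr' ?_
    filter_upwards [hIoo] with ε hε
    obtain ⟨h1, h2, _⟩ := hmem ε hε
    obtain ⟨hsl, hsr, hs0, hpl, hpr⟩ := hfacts ε hε
    have e1 := heq1 ε hε
    have e2 := heq2 ε hε
    have n1 : us ε - ur ≠ 0 := ne_of_gt (by linarith)
    have n2 : ρs ε + ρl ≠ 0 := by positivity
    have n3 : ρs ε - ρr ≠ 0 := ne_of_gt (by linarith)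
    have n4 : p (ρs ε) - p ρr ≠ 0 := ne_of_gt (by linarith)
    rw [div_pow, div_mul_div_comm, div_mul_div_comm,
      div_eq_div_iff (by positivity) (by positivity)]
    linear_combination (2 * (ρs ε - ρl) * (p (ρs ε) - p ρl)) * e2 -
      (2 * (ρs ε - ρr) * (p (ρs ε) - p ρr)) * e1
  -- t limit
  have htT : Tendsto (fun ε => (ul - us ε)/(us ε - ur)) (𝓝[>] (0:ℝ)) (𝓝 1) := by
    have hsq : Tendsto (fun ε => Real.sqrt (((ul - us ε)/(us ε - ur))^2)) (𝓝[>] (0:ℝ))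
        (𝓝 (Real.sqrt 1)) := (Real.continuous_sqrt.tendsto 1).comp ht2
    rw [Real.sqrt_one] at hsq
    refine hsq.congr' ?_
    filter_upwards [hIoo] with ε hε
    obtain ⟨h1, h2, _⟩ := hmem ε hε
    have hx : 0 ≤ (ul - us ε)/(us ε - ur) := by
      apply div_nonneg <;> linarith
    exact Real.sqrt_sq hx
  -- us limit
  have husT : Tendsto us (𝓝[>] (0:ℝ)) (𝓝 ((ul + ur)/2)) := by
    have hnum : Tendsto (fun ε => (ul + ((ul - us ε)/(us ε - ur)) * ur) /
        (1 + (ul - us ε)/(us ε - ur))) (𝓝[>] (0:ℝ)) (𝓝 ((ul + 1 * ur)/(1 + 1))) :=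
      (tendsto_const_nhds.add (htT.mul tendsto_const_nhds)).div
        (tendsto_const_nhds.add htT) (by norm_num)
    rw [show (ul + 1 * ur)/(1 + 1) = (ul + ur)/2 by ring] at hnum
    refine hnum.congr' ?_
    filter_upwards [hIoo] with ε hε
    obtain ⟨h1, h2, _⟩ := hmem ε hε
    have n1 : us ε - ur ≠ 0 := ne_of_gt (by linarith)
    have h6 : 0 < (ul - us ε)/(us ε - ur) := div_pos (by linarith) (by linarith)
    have n5 : 1 + (ul - us ε)/(us ε - ur) ≠ 0 := by linarith
    rw [div_eq_iff n5]
    field_simp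
    ring
  constructor
  · exact aux_speed hη husT hAl
      (fun ε hε => ⟨ne_of_lt (hmem ε hε).2.1, (hfacts ε hε).1⟩) heq1
  · exact aux_speed hη husT hAr
      (fun ε hε => ⟨ne_of_gt (hmem ε hε).1, (hfacts ε hε).2.1⟩) heq2
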